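/- Let U ⊆ ℝ^n be open, and let ψ, χ : U → ℝ^{n+2} and τ : U → ℝ be differentiable at x ∈ U, with ⟨ψ(y), ψ(y)⟩ = 1, ⟨χ(y), χ(y)⟩ = 1 and ⟨ψ(y), χ(y)⟩ = 0 for all y ∈ U (Euclidean inner product). Let θ : ℝ → ℝ be differentiable. Define φ := cos(θ∘τ)·ψ − sin(θ∘τ)·χ and ν := sin(θ∘τ)·ψ + cos(θ∘τ)·χ. Then for every v ∈ ℝ^n, ⟨dφ_x(v), ν(x)⟩ = −θ'(τ(x))·dτ_x(v) + ⟨dψ_x(v), χ(x)⟩. -/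

import Mathlib

open scoped RealInnerProductSpace

/-- Key computation of Section 2 in the spherical case: for
`φ = cos(θ∘τ)·ψ − sin(θ∘τ)·χ` and `ν = sin(θ∘τ)·ψ + cos(θ∘τ)·χ`, one has
`⟨dφ_x(v), ν(x)⟩ = −θ'(τ(x))·dτ_x(v) + ⟨dψ_x(v), χ(x)⟩`. -/
theorem stmt4 {n : ℕ} (U : Set (EuclideanSpace ℝ (Fin n))) (hU : IsOpen U)
    (x : EuclideanSpace ℝ (Fin n)) (hx : x ∈ U)
    (ψ χ : EuclideanSpace ℝ (Fin n) → EuclideanSpace ℝ (Fin (n + 2)))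
    (τ : EuclideanSpace ℝ (Fin n) → ℝ)
    (hψ : DifferentiableAt ℝ ψ x) (hχ : DifferentiableAt ℝ χ x)
    (hτ : DifferentiableAt ℝ τ x)
    (hψψ : ∀ y ∈ U, ⟪ψ y, ψ y⟫ = 1)
    (hχχ : ∀ y ∈ U, ⟪χ y, χ y⟫ = 1)
    (hψχ : ∀ y ∈ U, ⟪ψ y, χ y⟫ = 0)
    (θ : ℝ → ℝ) (hθ : Differentiable ℝ θ)
    (φ ν : EuclideanSpace ℝ (Fin n) → EuclideanSpace ℝ (Fin (n + 2)))
    (hφ : ∀ y, φ y = Real.cos (θ (τ y)) • ψ y - Real.sin (θ (τ y)) • χ y)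
    (hν : ∀ y, ν y = Real.sin (θ (τ y)) • ψ y + Real.cos (θ (τ y)) • χ y) :
    ∀ v, ⟪fderiv ℝ φ x v, ν x⟫ =
      - deriv θ (τ x) * fderiv ℝ τ x v + ⟪fderiv ℝ ψ x v, χ x⟫ := by
  intro v
  have hUx : U ∈ nhds x := hU.mem_nhds hx
  -- f = θ ∘ τ
  set F : EuclideanSpace ℝ (Fin n) →L[ℝ] ℝ := deriv θ (τ x) • fderiv ℝ τ x with hF
  have hf : HasFDerivAt (fun y => θ (τ y)) F x := by
    simpa [hF, Function.comp_def] using ((hθ (τ x)).hasDerivAt.comp_hasFDerivAt x hτ.hasFDerivAt)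
  have hcos : HasFDerivAt (fun y => Real.cos (θ (τ y))) ((-Real.sin (θ (τ x))) • F) x := by
    refine ((Real.hasDerivAt_cos (θ (τ x))).comp_hasFDerivAt x hf).congr_fderiv ?_
    ext w; simp
  have hsin : HasFDerivAt (fun y => Real.sin (θ (τ y))) ((Real.cos (θ (τ x))) • F) x := by
    simpa [Function.comp_def] using (Real.hasDerivAt_sin (θ (τ x))).comp_hasFDerivAt x hf
  set Pd := fderiv ℝ ψ x
  set Cd := fderiv ℝ χ x
  have hφ' : HasFDerivAt φ
      ((Real.cos (θ (τ x)) • Pd + ((-Real.sin (θ (τ x))) • F).smulRight (ψ x)) -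
       (Real.sin (θ (τ x)) • Cd + ((Real.cos (θ (τ x))) • F).smulRight (χ x))) x := by
    have := (hcos.smul hψ.hasFDerivAt).sub (hsin.smul hχ.hasFDerivAt)
    apply this.congr_of_eventuallyEq
    filter_upwards with y using (hφ y)
  -- derivative facts from constant inner products
  have key : ∀ (f g : EuclideanSpace ℝ (Fin n) → EuclideanSpace ℝ (Fin (n + 2)))
      (hfd : DifferentiableAt ℝ f x) (hgd : DifferentiableAt ℝ g x) (c : ℝ)
      (hc : ∀ y ∈ U, ⟪f y, g y⟫ = c),
      ⟪f x, fderiv ℝ g x v⟫ + ⟪fderiv ℝ f x v, g x⟫ = 0 := by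
    intro f g hfd hgd c hc
    have h1 : fderiv ℝ (fun y => ⟪f y, g y⟫) x = 0 := by
      have : (fun y => ⟪f y, g y⟫) =ᶠ[nhds x] fun _ => c := by
        filter_upwards [hUx] with y hy using hc y hy
      rw [this.fderiv_eq]; exact fderiv_const_apply c
    have h2 := fderiv_inner_apply ℝ hfd hgd v
    rw [h1] at h2
    simpa using h2.symm
  have e1 : ⟪ψ x, Pd v⟫ + ⟪Pd v, ψ x⟫ = 0 := key ψ ψ hψ hψ 1 hψψ
  have e2 : ⟪χ x, Cd v⟫ + ⟪Cd v, χ x⟫ = 0 := key χ χ hχ hχ 1 hχχ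
  have e3 : ⟪ψ x, Cd v⟫ + ⟪Pd v, χ x⟫ = 0 := key ψ χ hψ hχ 0 hψχ
  have e1' : ⟪Pd v, ψ x⟫ = 0 := by
    rw [real_inner_comm] at e1; linarith
  have e2' : ⟪Cd v, χ x⟫ = 0 := by
    rw [real_inner_comm] at e2; linarith
  have e3' : ⟪Cd v, ψ x⟫ = - ⟪Pd v, χ x⟫ := by
    linarith [real_inner_comm (Cd v) (ψ x)]
  have hψψx := hψψ x hx
  have hχχx := hχχ x hx
  have hψχx := hψχ x hx
  have hχψx : ⟪χ x, ψ x⟫ = 0 := by rw [real_inner_comm]; exact hψχx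
  rw [hφ'.fderiv, hν x]
  simp only [ContinuousLinearMap.sub_apply, ContinuousLinearMap.add_apply,
    ContinuousLinearMap.smul_apply, ContinuousLinearMap.smulRight_apply,
    inner_add_right, inner_sub_left, inner_add_left, inner_smul_left, inner_smul_right,
    real_inner_smul_left, real_inner_smul_right, map_smul, smul_eq_mul,
    starRingEnd_apply, star_trivial]
  rw [hψψx, hχχx, hψχx, hχψx, e1', e2', e3']
  have hFv : F v = deriv θ (τ x) * fderiv ℝ τ x v := by
    simp [hF]
  rw [hFv]
  have hsc := Real.sin_sq_add_cos_sq (θ (τ x))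
  linear_combination (⟪Pd v, χ x⟫ - deriv θ (τ x) * fderiv ℝ τ x v) * hsc
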